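/- Let μ > 0, 0 < ν < 1 and 0 < p < 1 be real numbers, set y_m := ⌊μ/(1−p)^(1/ν)⌋ and B := (1/p) · μ^(ν·y_m) / ((1−p)^(y_m) · (y_m!)^ν). Then the COM-Poisson normalising constant satisfies 𝒵(μ, ν) = ∑_{y=0}^∞ (μ^y/y!)^ν ≤ B. -/

import Mathlib

/-- For `μ > 0`, `0 < ν < 1`, `0 < p < 1`, `y_m := ⌊μ/(1−p)^(1/ν)⌋` and
`B := (1/p) · μ^(ν·y_m) / ((1−p)^(y_m) · (y_m!)^ν)`, the COM-Poisson normalising constant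
satisfies `∑_{y=0}^∞ (μ^y/y!)^ν ≤ B`. -/
theorem stmt_10 (μ ν p : ℝ) (hμ : 0 < μ) (hν0 : 0 < ν) (hν1 : ν < 1)
    (hp0 : 0 < p) (hp1 : p < 1)
    (ym : ℕ) (hym : ym = ⌊μ / (1 - p) ^ (1 / ν)⌋₊)
    (B : ℝ)
    (hB : B = (1 / p) * (μ ^ (ν * (ym : ℝ)) /
      ((1 - p) ^ ym * (Nat.factorial ym : ℝ) ^ ν))) :
    ∑' y : ℕ, (μ ^ y / (Nat.factorial y : ℝ)) ^ ν ≤ B := by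
  have hq0 : (0:ℝ) < 1 - p := by linarith
  have hq1 : 1 - p < 1 := by linarith
  have hνne : ν ≠ 0 := ne_of_gt hν0
  set q : ℝ := 1 - p with hqdef
  set c : ℝ := μ / q ^ ((1:ℝ)/ν) with hcdef
  have hc0 : 0 < c := div_pos hμ (Real.rpow_pos_of_pos hq0 _)
  set h : ℕ → ℝ := fun y => μ ^ y / ((Nat.factorial y : ℝ) * q ^ ((y:ℝ)/ν)) with hhdef
  have hfac : ∀ y : ℕ, (0:ℝ) < (Nat.factorial y : ℝ) := fun y => by
    exact_mod_cast Nat.factorial_pos y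
  have hhpos : ∀ y, 0 < h y := fun y =>
    div_pos (pow_pos hμ y) (mul_pos (hfac y) (Real.rpow_pos_of_pos hq0 _))
  have hratio : ∀ y : ℕ, h (y+1) = h y * (c / ((y:ℝ)+1)) := by
    intro y
    have h1 : (((y:ℕ)+1:ℕ):ℝ)/ν = (y:ℝ)/ν + 1/ν := by push_cast; ring
    have h2 : q ^ ((((y:ℕ)+1:ℕ):ℝ)/ν) = q ^ ((y:ℝ)/ν) * q ^ ((1:ℝ)/ν) := by
      rw [h1, Real.rpow_add hq0]
    have hne1 : q ^ ((y:ℝ)/ν) ≠ 0 := ne_of_gt (Real.rpow_pos_of_pos hq0 _)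
    have hne2 : q ^ ((1:ℝ)/ν) ≠ 0 := ne_of_gt (Real.rpow_pos_of_pos hq0 _)
    have hy1 : ((y:ℝ)+1) ≠ 0 := by positivity
    simp only [hhdef, hcdef]
    rw [Nat.factorial_succ, h2]
    push_cast
    field_simp
    ring
  have hmaxle : ∀ y, y ≤ ym → h y ≤ h ym := by
    have key : ∀ d y, y + d = ym → h y ≤ h ym := by
      intro d
      induction d with
      | zero => intro y hy; simp only [Nat.add_zero] at hy; rw [hy]
      | succ d ih =>
        intro y hy
        have hstep : h y ≤ h (y+1) := by
          have hy1c : ((y:ℝ)+1) ≤ c := by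
            have h1 : y + 1 ≤ ym := by omega
            have h2 : (ym : ℝ) ≤ c := by rw [hym]; exact Nat.floor_le hc0.le
            have h3 : ((y:ℝ)+1) ≤ (ym:ℝ) := by exact_mod_cast h1
            linarith
          have hone : (1:ℝ) ≤ c / ((y:ℝ)+1) := (one_le_div (by positivity)).2 hy1c
          calc h y = h y * 1 := (mul_one _).symm
            _ ≤ h y * (c / ((y:ℝ)+1)) :=
                mul_le_mul_of_nonneg_left hone (hhpos y).le
            _ = h (y+1) := (hratio y).symm
        exact hstep.trans (ih (y+1) (by omega))
    intro y hy
    exact key (ym - y) y (by omega)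
  have hmaxge : ∀ y, ym ≤ y → h y ≤ h ym := by
    intro y hy
    induction y, hy using Nat.le_induction with
    | base => exact le_refl _
    | succ y hy ih =>
      have hc' : c < (y:ℝ) + 1 := by
        have h1 : c < (ym:ℝ) + 1 := by
          have := Nat.lt_floor_add_one c
          rw [← hym] at this
          exact_mod_cast this
        have h2 : (ym:ℝ) ≤ (y:ℝ) := by exact_mod_cast hy
        linarith
      have hone : c / ((y:ℝ)+1) ≤ 1 := (div_le_one (by positivity)).2 hc'.le
      calc h (y+1) = h y * (c/((y:ℝ)+1)) := hratio y
        _ ≤ h y * 1 := mul_le_mul_of_nonneg_left hone (hhpos y).le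
        _ = h y := mul_one _
        _ ≤ h ym := ih
  have hmax : ∀ y, h y ≤ h ym := fun y =>
    (le_or_gt y ym).elim (hmaxle y) (fun h' => hmaxge y h'.le)
  have hterm : ∀ y : ℕ, (μ ^ y / (Nat.factorial y : ℝ)) ^ ν = h y ^ ν * q ^ y := by
    intro y
    have hqy : (q ^ ((y:ℝ)/ν)) ^ ν = q ^ y := by
      rw [← Real.rpow_natCast q y, ← Real.rpow_mul hq0.le]
      congr 1
      field_simp
    have hqyne : (q:ℝ) ^ y ≠ 0 := by positivity
    simp only [hhdef]
    have hy : (μ ^ y / ((Nat.factorial y : ℝ) * q ^ ((y:ℝ)/ν))) ^ ν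
        = (μ ^ y) ^ ν / ((Nat.factorial y : ℝ) ^ ν * q ^ y) := by
      rw [Real.div_rpow (pow_pos hμ y).le (by positivity),
          Real.mul_rpow (hfac y).le (Real.rpow_pos_of_pos hq0 _).le, hqy]
    rw [hy, Real.div_rpow (pow_pos hμ y).le (hfac y).le]
    field_simp
  have hBh : B = h ym ^ ν * (1/p) := by
    have hterm' := hterm ym
    have hμym : μ ^ (ν * (ym:ℝ)) = (μ ^ ym) ^ ν := by
      rw [← Real.rpow_natCast μ ym, ← Real.rpow_mul hμ.le, mul_comm]
    have hdiv : (μ ^ ym / (Nat.factorial ym : ℝ)) ^ ν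
        = (μ ^ ym) ^ ν / (Nat.factorial ym : ℝ) ^ ν :=
      Real.div_rpow (pow_pos hμ ym).le (hfac ym).le ν
    rw [hB, hμym]
    have hqym : (0:ℝ) < q ^ ym := pow_pos hq0 ym
    have hfν : (0:ℝ) < (Nat.factorial ym : ℝ) ^ ν := Real.rpow_pos_of_pos (hfac ym) ν
    have : h ym ^ ν = (μ ^ ym) ^ ν / ((Nat.factorial ym : ℝ) ^ ν * q ^ ym) := by
      have := hterm ym
      rw [hdiv] at this
      field_simp at this ⊢
      linarith [this]
    rw [this]
    field_simp
  have hsum_geo : Summable (fun y : ℕ => h ym ^ ν * q ^ y) :=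
    (summable_geometric_of_lt_one hq0.le hq1).mul_left _
  have htnn : ∀ y : ℕ, 0 ≤ (μ ^ y / (Nat.factorial y : ℝ)) ^ ν := fun y =>
    Real.rpow_nonneg (by positivity) _
  have htle : ∀ y : ℕ, (μ ^ y / (Nat.factorial y : ℝ)) ^ ν ≤ h ym ^ ν * q ^ y := by
    intro y
    rw [hterm y]
    exact mul_le_mul_of_nonneg_right
      (Real.rpow_le_rpow (hhpos y).le (hmax y) hν0.le) (by positivity)
  have hsumt : Summable (fun y : ℕ => (μ ^ y / (Nat.factorial y : ℝ)) ^ ν) :=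
    Summable.of_nonneg_of_le htnn htle hsum_geo
  calc ∑' y : ℕ, (μ ^ y / (Nat.factorial y : ℝ)) ^ ν
      ≤ ∑' y : ℕ, h ym ^ ν * q ^ y := Summable.tsum_le_tsum htle hsumt hsum_geo
    _ = h ym ^ ν * (1 - q)⁻¹ := by
        rw [tsum_mul_left, tsum_geometric_of_lt_one hq0.le hq1]
    _ = B := by
        rw [hBh]
        have : 1 - q = p := by rw [hqdef]; ring
        rw [this, one_div]
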